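/- arXiv:1308.1392 — 2 statements merged into one kernel-verified Lean document; each statement's English description precedes it below -/
import Mathlib

section
/- Let M₀ be a closed subspace of H, let p ∈ M₀^⊥, and let ν be a Borel probability measure on B having the law μ_{M_p}. Then ν is concentrated on the closure in B of the affine subspace i(p + M₀): that is, ν(cl_B({i(p + m) : m ∈ M₀})) = 1. -/
open MeasureTheory
open scoped RealInnerProductSpace

lemma ae_eq_of_char {B : Type*} [NormedAddCommGroup B] [NormedSpace ℝ B]
    [MeasurableSpace B] [BorelSpace B]
    (ν : Measure B) [IsProbabilityMeasure ν] (L : B →L[ℝ] ℝ) (c : ℝ)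
    (h : ∀ t : ℝ, ∫ x, Complex.exp (((t * (L x - c) : ℝ) : ℂ) * Complex.I) ∂ν = 1) :
    ∀ᵐ x ∂ν, L x = c := by
  have hcont : ∀ t : ℝ, Continuous fun x : B =>
      Complex.exp (((t * (L x - c) : ℝ) : ℂ) * Complex.I) := by
    intro t; fun_prop
  have hInt : ∀ t : ℝ, Integrable
      (fun x : B => Complex.exp (((t * (L x - c) : ℝ) : ℂ) * Complex.I)) ν := by
    intro t
    refine (integrable_const (1:ℝ)).mono' ((hcont t).aestronglyMeasurable) ?_
    exact Filter.Eventually.of_forall fun x => by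
      rw [Complex.norm_exp_ofReal_mul_I]
  have hcos : ∀ t : ℝ, ∫ x, Real.cos (t * (L x - c)) ∂ν = 1 := by
    intro t
    have h2 : ∫ x, Real.cos (t * (L x - c)) ∂ν
        = (∫ x, Complex.exp (((t * (L x - c) : ℝ) : ℂ) * Complex.I) ∂ν).re := by
      have := integral_re (𝕜 := ℂ) (hInt t)
      simp only [RCLike.re_to_complex] at this
      rw [← this]
      congr 1; ext x
      rw [Complex.exp_ofReal_mul_I_re]
    rw [h2, h t]; simp
  have hIntcos : ∀ t : ℝ, Integrable (fun x => Real.cos (t * (L x - c))) ν := by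
    intro t
    refine (integrable_const (1:ℝ)).mono' ?_ ?_
    · exact (Real.continuous_cos.comp (by fun_prop)).aestronglyMeasurable
    · exact Filter.Eventually.of_forall fun x => by
        simpa using Real.abs_cos_le_one (t * (L x - c))
  have haecos : ∀ t : ℝ, ∀ᵐ x ∂ν, Real.cos (t * (L x - c)) = 1 := by
    intro t
    have hI : Integrable (fun x => 1 - Real.cos (t * (L x - c))) ν :=
      (integrable_const 1).sub (hIntcos t)
    have h0 : ∫ x, (1 - Real.cos (t * (L x - c))) ∂ν = 0 := by
      rw [integral_sub (integrable_const 1) (hIntcos t)]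
      simp [hcos t]
    have := (integral_eq_zero_iff_of_nonneg_ae
      (Filter.Eventually.of_forall fun x => by simpa using Real.cos_le_one (t * (L x - c))) hI).1 h0
    filter_upwards [this] with x hx
    have : Real.cos (t * (L x - c)) = 1 := by
      have := hx; simp at this; linarith
    exact this
  filter_upwards [haecos 1, haecos (Real.sqrt 2)] with x h1 h2
  rw [Real.cos_eq_one_iff] at h1 h2
  obtain ⟨n, hn⟩ := h1
  obtain ⟨m, hm⟩ := h2
  rw [one_mul] at hn
  by_contra hne
  have hd : L x - c ≠ 0 := sub_ne_zero.mpr hne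
  have hn0 : (n : ℝ) ≠ 0 := by
    intro h0; rw [h0, zero_mul] at hn; exact hd hn.symm
  have hπ : (2 * Real.pi) ≠ 0 := by positivity
  have hs2 : Real.sqrt 2 * ((n:ℝ) * (2 * Real.pi)) = (m:ℝ) * (2 * Real.pi) := by
    rw [hn, hm]
  have h3 : (Real.sqrt 2 * (n:ℝ)) * (2 * Real.pi) = (m:ℝ) * (2 * Real.pi) := by
    rw [mul_assoc]; exact hs2
  have h4 : Real.sqrt 2 * (n:ℝ) = (m:ℝ) := mul_right_cancel₀ hπ h3
  have hs : Real.sqrt 2 = (m : ℝ) / (n : ℝ) := by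
    rw [eq_div_iff hn0]; exact h4
  exact irrational_sqrt_two ⟨(m : ℚ)/(n : ℚ), by push_cast; rw [hs]⟩


/-- A measure with the law `μ_{M_p}` is concentrated on the closure in `B`
of the affine subspace `i(p + M₀)`. -/
theorem measure_concentrated_on_closure_affine_subspace
    {H B : Type*}
    [NormedAddCommGroup H] [InnerProductSpace ℝ H] [CompleteSpace H]
    [TopologicalSpace.SeparableSpace H]
    [NormedAddCommGroup B] [NormedSpace ℝ B] [CompleteSpace B]
    [TopologicalSpace.SeparableSpace B]
    [MeasurableSpace B] [BorelSpace B]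
    (i : H →L[ℝ] B) (hi : Function.Injective i) (hiDense : DenseRange i)
    (j : (B →L[ℝ] ℝ) → H)
    (hj : ∀ (L : B →L[ℝ] ℝ) (h : H), ⟪j L, h⟫ = L (i h))
    (μ : MeasureTheory.Measure B) [MeasureTheory.IsProbabilityMeasure μ]
    (hμ : ∀ L : B →L[ℝ] ℝ,
      ∫ x, Complex.exp (Complex.I * (L x : ℂ)) ∂μ
        = Complex.exp (-(‖j L‖ ^ 2 : ℝ) / 2))
    (M₀ : Submodule ℝ H) [CompleteSpace M₀] (p : H) (hp : p ∈ M₀ᗮ)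
    (ν : MeasureTheory.Measure B) [MeasureTheory.IsProbabilityMeasure ν]
    (hν : ∀ L : B →L[ℝ] ℝ,
      ∫ x, Complex.exp (Complex.I * (L x : ℂ)) ∂ν
        = Complex.exp (Complex.I * (⟪p, j L⟫ : ℝ)
            - (‖(M₀.orthogonalProjectionOnto (j L) : H)‖ ^ 2 : ℝ) / 2)) :
    ν (closure ((fun m : H => i (p + m)) '' (M₀ : Set H))) = 1 := by
  set S : Set B := (fun m : H => i (p + m)) '' (M₀ : Set H) with hS
  set C : Set B := closure S with hC
  -- convexity of S
  have hSconv : Convex ℝ S := by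
    rintro x ⟨m1, hm1, rfl⟩ y ⟨m2, hm2, rfl⟩ a b ha hb hab
    refine ⟨a • m1 + b • m2, M₀.add_mem (M₀.smul_mem _ hm1) (M₀.smul_mem _ hm2), ?_⟩
    have hcomb : p + (a • m1 + b • m2) = a • (p + m1) + b • (p + m2) := by
      have h1 : a • (p + m1) + b • (p + m2) = (a + b) • p + (a • m1 + b • m2) := by
        module
      rw [h1, hab, one_smul]
    simp only [hcomb, map_add, _root_.map_smul]
  -- linearity of j on scalars
  have hjsmul : ∀ (t : ℝ) (L : B →L[ℝ] ℝ), j (t • L) = t • j L := by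
    intro t L
    refine ext_inner_right ℝ fun v => ?_
    rw [hj, real_inner_smul_left, hj]
    simp
  -- locally null
  have hloc : ∀ x ∈ Cᶜ, ∃ U ∈ nhdsWithin x Cᶜ, ν U = 0 := by
    intro x hx
    obtain ⟨f, u, hfu, hux⟩ :=
      geometric_hahn_banach_closed_point (hSconv.closure) isClosed_closure hx
    have hpc : f (i p) < u := by
      refine hfu _ (subset_closure ⟨0, M₀.zero_mem, by simp⟩)
    have hf0 : ∀ m ∈ M₀, f (i m) = 0 := by
      intro m hm
      by_contra hd
      have hlt : f (i (p + ((u - f (i p)) / f (i m)) • m)) < u :=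
        hfu _ (subset_closure ⟨_, M₀.smul_mem _ hm, rfl⟩)
      have heq : f (i (p + ((u - f (i p)) / f (i m)) • m)) = u := by
        rw [map_add, map_add, ContinuousLinearMap.map_smul, ContinuousLinearMap.map_smul]
        simp only [smul_eq_mul]
        rw [div_mul_cancel₀ _ hd]
        ring
      rw [heq] at hlt
      exact lt_irrefl _ hlt
    set c : ℝ := f (i p) with hc
    have hjf : j f ∈ M₀ᗮ := by
      intro m hm
      rw [real_inner_comm, hj, hf0 m hm]
    -- characteristic function of f under ν is that of δ_c
    have hchar : ∀ t : ℝ, ∫ y, Complex.exp (((t * (f y - c) : ℝ) : ℂ) * Complex.I) ∂ν = 1 := by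
      intro t
      have h1 := hν (t • f)
      have hpj : ⟪p, j (t • f)⟫ = t * c := by
        rw [hjsmul, real_inner_smul_right, real_inner_comm, hj]
      have hproj : (M₀.orthogonalProjectionOnto (j (t • f)) : H) = 0 := by
        rw [hjsmul, _root_.map_smul,
          Submodule.orthogonalProjectionOnto_apply_of_mem_orthogonal hjf]
        simp
      rw [hpj, hproj] at h1
      simp only [norm_zero] at h1
      have h2 : ∀ y : B, Complex.exp (((t * (f y - c) : ℝ) : ℂ) * Complex.I)
          = Complex.exp (Complex.I * (((t • f) y : ℝ) : ℂ))
            * Complex.exp (-(Complex.I * ((t * c : ℝ) : ℂ))) := by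
        intro y
        rw [← Complex.exp_add]
        congr 1
        simp only [ContinuousLinearMap.smul_apply, smul_eq_mul]
        push_cast
        ring
      calc ∫ y, Complex.exp (((t * (f y - c) : ℝ) : ℂ) * Complex.I) ∂ν
          = ∫ y, Complex.exp (Complex.I * (((t • f) y : ℝ) : ℂ))
              * Complex.exp (-(Complex.I * ((t * c : ℝ) : ℂ))) ∂ν := by
            simp only [h2]
        _ = (∫ y, Complex.exp (Complex.I * (((t • f) y : ℝ) : ℂ)) ∂ν)
              * Complex.exp (-(Complex.I * ((t * c : ℝ) : ℂ))) := integral_mul_const _ _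
        _ = 1 := by
            rw [h1, ← Complex.exp_add]
            norm_num
    have hae := ae_eq_of_char ν f c hchar
    refine ⟨{y | f y ≠ c}, ?_, ?_⟩
    · refine mem_nhdsWithin_of_mem_nhds (IsOpen.mem_nhds ?_ ?_)
      · exact isOpen_ne_fun f.continuous continuous_const
      · exact ne_of_gt (lt_trans hpc hux)
    · have : {y | f y ≠ c} = {y | ¬ f y = c} := rfl
      rw [this, ← ae_iff]
      exact hae
  have hCc : ν Cᶜ = 0 :=
    measure_null_of_locally_null _ hloc
  rw [measure_congr (ae_eq_univ.2 hCc), measure_univ]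
end

section
/- For every x* ∈ B*, ∫_{Q₀^⊥} (∫_B exp(i·x*(x)) dν_p(x)) dγ(p) = exp(−½‖j(x*)‖²); that is, the γ-average over p ∈ Q₀^⊥ of the characteristic functionals of the measures ν_p equals the characteristic functional of the Wiener measure μ. -/
open MeasureTheory
open scoped RealInnerProductSpace

/-- The `γ`-average over `p ∈ Q₀ᗮ` of the characteristic functionals of
the measures `ν_p` is the characteristic functional of Wiener measure `μ`. -/
theorem average_characteristic_functional
    {H B : Type*}
    [NormedAddCommGroup H] [InnerProductSpace ℝ H] [CompleteSpace H]
    [TopologicalSpace.SeparableSpace H]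
    [MeasurableSpace H] [BorelSpace H]
    [NormedAddCommGroup B] [NormedSpace ℝ B] [CompleteSpace B]
    [TopologicalSpace.SeparableSpace B]
    [MeasurableSpace B] [BorelSpace B]
    (i : H →L[ℝ] B) (hi : Function.Injective i) (hiDense : DenseRange i)
    (j : (B →L[ℝ] ℝ) → H)
    (hj : ∀ (L : B →L[ℝ] ℝ) (h : H), ⟪j L, h⟫ = L (i h))
    (μ : MeasureTheory.Measure B) [MeasureTheory.IsProbabilityMeasure μ]
    (hμ : ∀ L : B →L[ℝ] ℝ,
      ∫ x, Complex.exp (Complex.I * (L x : ℂ)) ∂μ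
        = Complex.exp (-(‖j L‖ ^ 2 : ℝ) / 2))
    (Q₀ : Submodule ℝ H) [CompleteSpace Q₀] [FiniteDimensional ℝ ↥Q₀ᗮ]
    (ν : ↥Q₀ᗮ → MeasureTheory.Measure B)
    (hνprob : ∀ p : ↥Q₀ᗮ, MeasureTheory.IsProbabilityMeasure (ν p))
    (hν : ∀ (p : ↥Q₀ᗮ) (L : B →L[ℝ] ℝ),
      ∫ x, Complex.exp (Complex.I * (L x : ℂ)) ∂(ν p)
        = Complex.exp (Complex.I * (⟪(p : H), j L⟫ : ℝ)
            - (‖(Q₀.orthogonalProjection (j L) : H)‖ ^ 2 : ℝ) / 2))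
    (γ : MeasureTheory.Measure ↥Q₀ᗮ) [MeasureTheory.IsProbabilityMeasure γ]
    (hγ : ∀ k : ↥Q₀ᗮ, ∫ p, Complex.exp (Complex.I * (⟪k, p⟫ : ℝ)) ∂γ
        = Complex.exp (-(‖k‖ ^ 2 : ℝ) / 2))
    (L : B →L[ℝ] ℝ) :
    ∫ p, (∫ x, Complex.exp (Complex.I * (L x : ℂ)) ∂(ν p)) ∂γ
      = Complex.exp (-(‖j L‖ ^ 2 : ℝ) / 2) := by
  set k : ↥Q₀ᗮ := Q₀ᗮ.orthogonalProjection (j L) with hk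
  have hinner : ∀ p : ↥Q₀ᗮ, (⟪(p : H), j L⟫ : ℝ) = ⟪k, p⟫ := by
    intro p
    have hdec : (Q₀.orthogonalProjection (j L) : H) + (k : H) = j L :=
      Q₀.starProjection_add_starProjection_orthogonal (j L)
    have h0 : ⟪(p : H), (Q₀.orthogonalProjection (j L) : H)⟫ = 0 := by
      rw [real_inner_comm]; exact p.2 _ (Q₀.orthogonalProjection (j L)).2
    calc ⟪(p : H), j L⟫
        = ⟪(p : H), (Q₀.orthogonalProjection (j L) : H) + (k : H)⟫ := by rw [hdec]
      _ = ⟪(p : H), (Q₀.orthogonalProjection (j L) : H)⟫ + ⟪(p : H), (k : H)⟫ :=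
          inner_add_right _ _ _
      _ = ⟪(k : H), (p : H)⟫ := by rw [h0, zero_add, real_inner_comm]
      _ = ⟪k, p⟫ := rfl
  simp_rw [hν, hinner]
  have hsplit : ∀ p : ↥Q₀ᗮ,
      Complex.exp (Complex.I * (⟪k, p⟫ : ℝ)
          - (‖(Q₀.orthogonalProjection (j L) : H)‖ ^ 2 : ℝ) / 2)
        = Complex.exp (-((‖(Q₀.orthogonalProjection (j L) : H)‖ ^ 2 : ℝ) / 2))
            * Complex.exp (Complex.I * (⟪k, p⟫ : ℝ)) := by
    intro p
    rw [← Complex.exp_add]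
    ring_nf
  simp_rw [hsplit]
  rw [integral_const_mul, hγ k, ← Complex.exp_add]
  congr 1
  have hpyth : ‖j L‖ ^ 2
      = ‖Q₀.orthogonalProjection (j L)‖ ^ 2 + ‖k‖ ^ 2 :=
    Submodule.norm_sq_eq_add_norm_sq_projection (j L) Q₀
  have : ‖(Q₀.orthogonalProjection (j L) : H)‖ = ‖Q₀.orthogonalProjection (j L)‖ := rfl
  push_cast [hpyth, this]
  ring
end
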